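/- For trees T, T' on {a,b}, define S(T) = T ∪ {w⌢c : w ∈ T, w⌢a ∉ T} ∪ {w⌢d : w ∈ T, w⌢b ∉ T}, a tree on {a,b,c,d}. If S(T) ⊆ S(T'), then T = T'. -/
import Mathlib


/-- Inclusion of `{a,b}^{<ℕ}` into `{a,b,c,d}^{<ℕ}` (`a,b,c,d` are `0,1,2,3`). -/
def abIncl : List (Fin 2) → List (Fin 4) :=
  List.map (Fin.castLE (by omega))

/-- The outlining map `S(T) = T ∪ t_a(T)⌢c ∪ t_b(T)⌢d` sending a tree on `{a,b}` to a
tree on `{a,b,c,d}`, where `t_a(T) = {w ∈ T : w⌢a ∉ T}` and `t_b(T) = {w ∈ T : w⌢b ∉ T}`. -/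
def outline (T : Set (List (Fin 2))) : Set (List (Fin 4)) :=
  (abIncl '' T) ∪
  {s | ∃ w ∈ T, w ++ [0] ∉ T ∧ s = abIncl w ++ [2]} ∪
  {s | ∃ w ∈ T, w ++ [1] ∉ T ∧ s = abIncl w ++ [3]}

lemma abIncl_inj : Function.Injective abIncl := by
  apply List.map_injective_iff.mpr
  intro x y hxy
  exact Fin.ext (by simpa using congrArg Fin.val hxy)

lemma abIncl_mem_lt {w : List (Fin 2)} {x : Fin 4} (hx : x ∈ abIncl w) : x.val < 2 := by
  obtain ⟨y, -, rfl⟩ := List.mem_map.1 hx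
  simpa using y.isLt

/-- If `T, T'` are trees on `{a,b}` and `S(T) ⊆ S(T')`, then `T = T'`. -/
theorem outline_subset_iff (T T' : Set (List (Fin 2)))
    (hT : ∀ u v : List (Fin 2), u <+: v → v ∈ T → u ∈ T) (hTne : T.Nonempty)
    (hT' : ∀ u v : List (Fin 2), u <+: v → v ∈ T' → u ∈ T') (hT'ne : T'.Nonempty)
    (h : outline T ⊆ outline T') :
    T = T' := by
  have hnil : [] ∈ T := hT [] _ (List.nil_prefix) hTne.choose_spec
  have h1 : T ⊆ T' := by
    intro w hw
    have hmem : abIncl w ∈ outline T' := h (Or.inl (Or.inl ⟨w, hw, rfl⟩))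
    rcases hmem with (⟨v, hv, hve⟩ | ⟨v, hv, -, hve⟩) | ⟨v, hv, -, hve⟩
    · exact abIncl_inj hve.symm ▸ hv
    · have h2 : (2 : Fin 4) ∈ abIncl w := hve ▸ List.mem_append_right _ (by simp)
      exact absurd (abIncl_mem_lt h2) (by decide)
    · have h2 : (3 : Fin 4) ∈ abIncl w := hve ▸ List.mem_append_right _ (by simp)
      exact absurd (abIncl_mem_lt h2) (by decide)
  have h2 : T' ⊆ T := by
    intro w hw
    induction w using List.reverseRecOn with
    | nil => exact hnil
    | append_singleton u x ih =>
      have hu' : u ∈ T' := hT' u _ ⟨[x], rfl⟩ hw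
      have hu : u ∈ T := ih hu'
      by_contra hux
      fin_cases x
      · have hm : abIncl u ++ [2] ∈ outline T := Or.inl (Or.inr ⟨u, hu, hux, rfl⟩)
        rcases h hm with (⟨v, hv, hve⟩ | ⟨v, hv, hv0, hve⟩) | ⟨v, hv, hv1, hve⟩
        · have h2 : (2 : Fin 4) ∈ abIncl v := hve.symm ▸ List.mem_append_right _ (by simp)
          exact absurd (abIncl_mem_lt h2) (by decide)
        · have huv : u = v := abIncl_inj (by simpa using congrArg List.dropLast hve)
          exact hv0 (huv ▸ hw)
        · have := congrArg List.getLast? hve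
          simp at this
      · have hm : abIncl u ++ [3] ∈ outline T := Or.inr ⟨u, hu, hux, rfl⟩
        rcases h hm with (⟨v, hv, hve⟩ | ⟨v, hv, hv0, hve⟩) | ⟨v, hv, hv1, hve⟩
        · have h2 : (3 : Fin 4) ∈ abIncl v := hve.symm ▸ List.mem_append_right _ (by simp)
          exact absurd (abIncl_mem_lt h2) (by decide)
        · have := congrArg List.getLast? hve
          simp at this
        · have huv : u = v := abIncl_inj (by simpa using congrArg List.dropLast hve)
          exact hv1 (huv ▸ hw)
  exact Set.Subset.antisymm h1 h2
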